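/- Bound on the number of jump discontinuities: let O ⊆ V be a nonempty set of core objects and let L = { c(u,v) : u, v ∈ O, u ≠ v, c(u,v) < 1 }. Then |L| ≤ |O|; equivalently, the cluster-count function α ↦ N(α) on [0,1) (the number of equivalence classes of R_α on O) takes at most |O| distinct values. -/
import Mathlib

open SimpleGraph

/-- Left-open path capacity of a walk: the minimum weight over all vertices of the
walk except the starting vertex (1 for the trivial walk). -/
noncomputable def walkCap {V : Type*} (ρ : V → ℝ) {G : SimpleGraph V} {u v : V}
    (p : G.Walk u v) : ℝ :=
  (p.support.tail.map ρ).foldr min 1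

/-- Left-open inter-node capacity: supremum (= maximum) of walk capacities over
all walks from `u` to `v`. -/
noncomputable def nodeCap {V : Type*} (ρ : V → ℝ) (G : SimpleGraph V) (u v : V) : ℝ :=
  sSup {x : ℝ | ∃ p : G.Walk u v, walkCap ρ p = x}

/-- `v` is α-reachable from `u`: there is a walk from `u` to `v` all of whose
vertices except possibly the start have weight strictly greater than `α`. -/
def AlphaReach {V : Type*} (ρ : V → ℝ) (G : SimpleGraph V) (α : ℝ) (u v : V) : Prop :=
  ∃ p : G.Walk u v, ∀ w ∈ p.support.tail, α < ρ w

/-- The number of equivalence classes ("clusters") of the relation `R_α` on the set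
`O` of core objects, where `u R_α v` iff `u = v` or `c(u,v) > α`. -/
noncomputable def numClusters {V : Type*} (ρ : V → ℝ) (G : SimpleGraph V) (O : Set V)
    (α : ℝ) : ℕ :=
  Nat.card (Quot (fun a b : O => (a : V) = (b : V) ∨ α < nodeCap ρ G a b))

/- ### Auxiliary lemmas -/

private lemma foldr_min_le_one (l : List ℝ) : l.foldr min 1 ≤ 1 := by
  induction l with
  | nil => simp
  | cons a l ih => exact le_trans (min_le_right _ _) ih

private lemma foldr_min_append (l1 l2 : List ℝ) :
    (l1 ++ l2).foldr min 1 = min (l1.foldr min 1) (l2.foldr min 1) := by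
  induction l1 with
  | nil => simpa using (min_eq_right (foldr_min_le_one l2)).symm
  | cons a l ih => simp [ih, min_assoc]

private lemma foldr_min_mem (l : List ℝ) : l.foldr min 1 = 1 ∨ l.foldr min 1 ∈ l := by
  induction l with
  | nil => left; rfl
  | cons a l ih =>
    rcases min_cases a (l.foldr min 1) with ⟨h, _⟩ | ⟨h, _⟩
    · right; simp [h]
    · rcases ih with h' | h'
      · left; simpa [h] using h'
      · right; simp only [List.foldr_cons, h]; exact List.mem_cons_of_mem _ h'

private lemma walkCap_le_one {V : Type*} (ρ : V → ℝ) {G : SimpleGraph V} {u v : V}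
    (p : G.Walk u v) : walkCap ρ p ≤ 1 := foldr_min_le_one _

private lemma walkCap_append {V : Type*} (ρ : V → ℝ) {G : SimpleGraph V} {u v w : V}
    (p : G.Walk u v) (q : G.Walk v w) :
    walkCap ρ (p.append q) = min (walkCap ρ p) (walkCap ρ q) := by
  have ht : (p.append q).support.tail = p.support.tail ++ q.support.tail := by
    rw [Walk.support_append]
    cases hc : p.support with
    | nil => exact absurd hc p.support_ne_nil
    | cons a t => simp [hc]
  unfold walkCap
  rw [ht, List.map_append, foldr_min_append]

/-- Full capacity (min over all support vertices) equals walkCap if the start has weight 1. -/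
private lemma fullCap_eq {V : Type*} (ρ : V → ℝ) {G : SimpleGraph V} {u v : V}
    (hu : ρ u = 1) (p : G.Walk u v) :
    (p.support.map ρ).foldr min 1 = walkCap ρ p := by
  conv_lhs => rw [Walk.support_eq_cons p]
  simp only [List.map_cons, List.foldr_cons, hu]
  exact min_eq_right (walkCap_le_one ρ p)

private lemma walkCap_reverse {V : Type*} (ρ : V → ℝ) {G : SimpleGraph V} {u v : V}
    (hu : ρ u = 1) (hv : ρ v = 1) (p : G.Walk u v) :
    walkCap ρ p.reverse = walkCap ρ p := by
  rw [← fullCap_eq ρ hv p.reverse, ← fullCap_eq ρ hu p]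
  rw [Walk.support_reverse, List.map_reverse]
  exact ((p.support.map ρ).reverse_perm).foldr_eq _

private lemma walkCap_mem {V : Type*} (ρ : V → ℝ) {G : SimpleGraph V} {u v : V}
    (p : G.Walk u v) : walkCap ρ p ∈ insert (1 : ℝ) (Set.range ρ) := by
  rcases foldr_min_mem (p.support.tail.map ρ) with h | h
  · left; exact h
  · right
    rcases List.mem_map.mp h with ⟨w, _, hw⟩
    exact ⟨w, hw⟩

private lemma capSet_finite {V : Type*} [Fintype V] (ρ : V → ℝ) (G : SimpleGraph V)
    (u v : V) : {x : ℝ | ∃ p : G.Walk u v, walkCap ρ p = x}.Finite := by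
  apply Set.Finite.subset ((Set.finite_range ρ).insert 1)
  rintro x ⟨p, rfl⟩
  exact walkCap_mem ρ p

private lemma walkCap_le_nodeCap {V : Type*} [Fintype V] (ρ : V → ℝ) {G : SimpleGraph V}
    {u v : V} (p : G.Walk u v) : walkCap ρ p ≤ nodeCap ρ G u v :=
  le_csSup (capSet_finite ρ G u v).bddAbove ⟨p, rfl⟩

private lemma nodeCap_exists {V : Type*} [Fintype V] (ρ : V → ℝ) {G : SimpleGraph V}
    (hG : G.Connected) (u v : V) : ∃ p : G.Walk u v, walkCap ρ p = nodeCap ρ G u v := by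
  have hne : {x : ℝ | ∃ p : G.Walk u v, walkCap ρ p = x}.Nonempty := by
    obtain ⟨p⟩ := hG u v
    exact ⟨_, p, rfl⟩
  exact hne.csSup_mem (capSet_finite ρ G u v)

private lemma nodeCap_comm {V : Type*} (ρ : V → ℝ) (G : SimpleGraph V) {u v : V}
    (hu : ρ u = 1) (hv : ρ v = 1) : nodeCap ρ G u v = nodeCap ρ G v u := by
  unfold nodeCap
  congr 1
  ext x
  constructor
  · rintro ⟨p, rfl⟩; exact ⟨p.reverse, walkCap_reverse ρ hu hv p⟩
  · rintro ⟨p, rfl⟩; exact ⟨p.reverse, walkCap_reverse ρ hv hu p⟩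

private lemma nodeCap_ultra {V : Type*} [Fintype V] (ρ : V → ℝ) {G : SimpleGraph V}
    (hG : G.Connected) (u v w : V) :
    min (nodeCap ρ G u v) (nodeCap ρ G v w) ≤ nodeCap ρ G u w := by
  obtain ⟨p, hp⟩ := nodeCap_exists ρ hG u v
  obtain ⟨q, hq⟩ := nodeCap_exists ρ hG v w
  calc min (nodeCap ρ G u v) (nodeCap ρ G v w) = walkCap ρ (p.append q) := by
        rw [walkCap_append, hp, hq]
      _ ≤ nodeCap ρ G u w := walkCap_le_nodeCap ρ _

/- ### Abstract ultrametric counting lemma -/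

private lemma vals_finite {α : Type*} (c : α → α → ℝ) (S : Finset α) :
    {x : ℝ | ∃ u ∈ S, ∃ v ∈ S, u ≠ v ∧ x = c u v}.Finite := by
  apply Set.Finite.subset (Set.finite_range fun p : S × S => c p.1 p.2)
  rintro x ⟨u, hu, v, hv, _, rfl⟩
  exact ⟨(⟨u, hu⟩, ⟨v, hv⟩), rfl⟩

private lemma key {α : Type*} (c : α → α → ℝ)
    (hu : ∀ u v w, min (c u v) (c v w) ≤ c u w)
    (S : Finset α) (hsym : ∀ u ∈ S, ∀ v ∈ S, c u v = c v u) :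
    {x : ℝ | ∃ u ∈ S, ∃ v ∈ S, u ≠ v ∧ x = c u v}.ncard ≤ S.card := by
  classical
  induction S using Finset.strongInduction with
  | _ S ih =>
    by_cases hcard : S.card ≤ 1
    · have : {x : ℝ | ∃ u ∈ S, ∃ v ∈ S, u ≠ v ∧ x = c u v} = ∅ := by
        ext x
        simp only [Set.mem_setOf_eq, Set.mem_empty_iff_false, iff_false, not_exists]
        rintro u ⟨hu1, v, hv', hne, _⟩
        exact absurd (Finset.one_lt_card.mpr ⟨u, hu1, v, hv', hne⟩) (by omega)
      rw [this]; simp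
    · push_neg at hcard
      -- pick a maximizing pair (a, b)
      have hP : ((S ×ˢ S).filter fun p => p.1 ≠ p.2).Nonempty := by
        obtain ⟨a, ha, b, hb, hab⟩ := Finset.one_lt_card.mp hcard
        exact ⟨(a, b), by simp [Finset.mem_filter, Finset.mem_product, ha, hb, hab]⟩
      obtain ⟨⟨a, b⟩, habm, hmax⟩ :=
        Finset.exists_max_image _ (fun p : α × α => c p.1 p.2) hP
      simp only [Finset.mem_filter, Finset.mem_product] at habm
      obtain ⟨⟨haS, hbS⟩, hab⟩ := habm
      have hmax' : ∀ u ∈ S, ∀ v ∈ S, u ≠ v → c u v ≤ c a b := by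
        intro u hu' v hv' hne
        exact hmax (u, v) (by simp [Finset.mem_filter, Finset.mem_product, hu', hv', hne])
      have heq : ∀ u ∈ S, u ≠ a → u ≠ b → c u a = c u b := by
        intro x hx hxa hxb
        have h1 : c x b ≤ c x a := by
          have := hu x b a
          rwa [hsym b hbS a haS, min_eq_left (hmax' x hx b hbS hxb)] at this
        have h2 : c x a ≤ c x b := by
          have := hu x a b
          rwa [min_eq_left (hmax' x hx a haS hxa)] at this
        exact le_antisymm h2 h1
      have hbmem : a ∈ S.erase b := Finset.mem_erase.mpr ⟨hab, haS⟩
      have hsub : {x : ℝ | ∃ u ∈ S, ∃ v ∈ S, u ≠ v ∧ x = c u v} ⊆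
          insert (c a b) {x : ℝ | ∃ u ∈ S.erase b, ∃ v ∈ S.erase b, u ≠ v ∧ x = c u v} := by
        rintro x ⟨u, hu', v, hv', huv, rfl⟩
        by_cases hub : u = b
        · subst hub
          by_cases hva : v = a
          · subst hva; left; exact hsym u hu' v hv'
          · right
            refine ⟨v, Finset.mem_erase.mpr ⟨Ne.symm huv, hv'⟩, a, hbmem, hva, ?_⟩
            rw [hsym u hu' v hv', heq v hv' hva (Ne.symm huv)]
        · by_cases hvb : v = b
          · subst hvb
            by_cases hua : u = a
            · subst hua; left; rfl
            · right
              refine ⟨u, Finset.mem_erase.mpr ⟨hub, hu'⟩, a, hbmem, hua, ?_⟩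
              exact (heq u hu' hua hub).symm
          · right
            exact ⟨u, Finset.mem_erase.mpr ⟨hub, hu'⟩, v, Finset.mem_erase.mpr ⟨hvb, hv'⟩,
              huv, rfl⟩
      have hss : S.erase b ⊂ S := Finset.erase_ssubset hbS
      have hrec := ih (S.erase b) hss (fun u hu' v hv' =>
        hsym u (Finset.mem_of_mem_erase hu') v (Finset.mem_of_mem_erase hv'))
      have h1 : {x : ℝ | ∃ u ∈ S, ∃ v ∈ S, u ≠ v ∧ x = c u v}.ncard ≤
          (insert (c a b) {x : ℝ | ∃ u ∈ S.erase b, ∃ v ∈ S.erase b, u ≠ v ∧ x = c u v}).ncard :=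
        Set.ncard_le_ncard hsub ((vals_finite c (S.erase b)).insert _)
      have h2 := Set.ncard_insert_le (c a b)
        {x : ℝ | ∃ u ∈ S.erase b, ∃ v ∈ S.erase b, u ≠ v ∧ x = c u v}
      have h3 : (S.erase b).card = S.card - 1 := Finset.card_erase_of_mem hbS
      omega

/- ### Main theorem -/

theorem JD_card_le {V : Type*} [Fintype V] (G : SimpleGraph V) (ρ : V → ℝ)
    (hρ : ∀ v : V, 0 ≤ ρ v ∧ ρ v ≤ 1) (hG : G.Connected)
    (O : Set V) (hOne : O.Nonempty) (hO : ∀ o ∈ O, ρ o = 1) :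
    {x : ℝ | ∃ u ∈ O, ∃ v ∈ O, u ≠ v ∧ x = nodeCap ρ G u v ∧ x < 1}.ncard ≤ O.ncard ∧
    {n : ℕ | ∃ α : ℝ, 0 ≤ α ∧ α < 1 ∧ numClusters ρ G O α = n}.ncard ≤ O.ncard := by
  classical
  have hOfin : O.Finite := Set.toFinite O
  set S : Finset V := hOfin.toFinset with hS
  have hcoe : ∀ x, x ∈ S ↔ x ∈ O := fun x => hOfin.mem_toFinset
  have hScard : S.card = O.ncard := (Set.ncard_eq_toFinset_card O hOfin).symm
  constructor
  · -- part 1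
    have hsub : {x : ℝ | ∃ u ∈ O, ∃ v ∈ O, u ≠ v ∧ x = nodeCap ρ G u v ∧ x < 1} ⊆
        {x : ℝ | ∃ u ∈ S, ∃ v ∈ S, u ≠ v ∧ x = nodeCap ρ G u v} := by
      rintro x ⟨u, hu', v, hv', hne, hx, _⟩
      exact ⟨u, (hcoe u).mpr hu', v, (hcoe v).mpr hv', hne, hx⟩
    have hk := key (nodeCap ρ G) (nodeCap_ultra ρ hG) S
      (fun u hu' v hv' => nodeCap_comm ρ G (hO u ((hcoe u).mp hu')) (hO v ((hcoe v).mp hv')))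
    calc {x : ℝ | ∃ u ∈ O, ∃ v ∈ O, u ≠ v ∧ x = nodeCap ρ G u v ∧ x < 1}.ncard
        ≤ {x : ℝ | ∃ u ∈ S, ∃ v ∈ S, u ≠ v ∧ x = nodeCap ρ G u v}.ncard :=
          Set.ncard_le_ncard hsub (vals_finite _ S)
      _ ≤ S.card := hk
      _ = O.ncard := hScard
  · -- part 2
    have hbound : ∀ α : ℝ, 1 ≤ numClusters ρ G O α ∧ numClusters ρ G O α ≤ O.ncard := by
      intro α
      have hOne' : Nonempty O := ⟨⟨hOne.choose, hOne.choose_spec⟩⟩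
      have hfinO : Finite O := hOfin.to_subtype
      constructor
      · have : Nonempty (Quot (fun a b : O => (a : V) = (b : V) ∨ α < nodeCap ρ G a b)) :=
          ⟨Quot.mk _ hOne'.some⟩
        exact Nat.one_le_iff_ne_zero.mpr Nat.card_pos.ne'
      · calc numClusters ρ G O α ≤ Nat.card O :=
              Nat.card_le_card_of_surjective _ (Quot.mk_surjective)
          _ = O.ncard := Nat.card_coe_set_eq _
    have hsub : {n : ℕ | ∃ α : ℝ, 0 ≤ α ∧ α < 1 ∧ numClusters ρ G O α = n} ⊆
        Set.Icc 1 O.ncard := by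
      rintro n ⟨α, _, _, rfl⟩
      exact ⟨(hbound α).1, (hbound α).2⟩
    calc {n : ℕ | ∃ α : ℝ, 0 ≤ α ∧ α < 1 ∧ numClusters ρ G O α = n}.ncard
        ≤ (Set.Icc 1 O.ncard).ncard := Set.ncard_le_ncard hsub (Set.finite_Icc _ _)
      _ = O.ncard := by
          rw [← Finset.coe_Icc, Set.ncard_coe_finset, Nat.card_Icc]
          omega
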